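/- The v-adic arithmetic gamma function satisfies the reflection formula: for all z ∈ ℤ_p, Γ_{ari,v}(z) · Γ_{ari,v}(1 − z) = Γ_{ari,v}(0). -/

import Mathlib

open Filter

private lemma aux_dvd (p : ℕ) [Fact p.Prime] (q e : ℕ) (hq : q = p ^ e)
    (digit : ℤ_[p] → ℕ → ℕ)
    (hdigSum : ∀ z : ℤ_[p], HasSum (fun i => (digit z i : ℤ_[p]) * (q : ℤ_[p]) ^ i) z)
    (w : ℤ_[p]) (N : ℕ) :
    ((p : ℤ_[p]) ^ (e * N)) ∣
      (w - ∑ i ∈ Finset.range N, (digit w i : ℤ_[p]) * (q : ℤ_[p]) ^ i) := by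
  rw [← Ideal.mem_span_singleton]
  have hclosed : IsClosed {x : ℤ_[p] | x ∈ Ideal.span {(p : ℤ_[p]) ^ (e * N)}} := by
    have hset : {x : ℤ_[p] | x ∈ Ideal.span {(p : ℤ_[p]) ^ (e * N)}}
        = {x : ℤ_[p] | ‖x‖ ≤ (p : ℝ) ^ (-(e * N : ℕ) : ℤ)} := by
      ext x
      exact (PadicInt.norm_le_pow_iff_mem_span_pow x (e * N)).symm
    rw [hset]
    exact isClosed_le continuous_norm continuous_const
  have htend := (hdigSum w).tendsto_sum_nat
  refine hclosed.mem_of_tendsto (htend.sub tendsto_const_nhds) ?_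
  filter_upwards [eventually_ge_atTop N] with M hM
  show _ ∈ Ideal.span _
  rw [← Finset.sum_Ico_eq_sub _ hM]
  refine Ideal.sum_mem _ fun i hi => ?_
  rw [Ideal.mem_span_singleton]
  refine Dvd.dvd.mul_left ?_ _
  have hle : e * N ≤ e * i := Nat.mul_le_mul_left e (Finset.mem_Ico.mp hi).1
  calc ((p : ℤ_[p]) ^ (e * N)) ∣ (p : ℤ_[p]) ^ (e * i) := pow_dvd_pow _ hle
    _ = (q : ℤ_[p]) ^ i := by rw [hq]; push_cast; rw [← pow_mul]

private lemma aux_nat_dvd (p : ℕ) [Fact p.Prime] (n m : ℕ)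
    (h : ((p : ℤ_[p]) ^ n) ∣ (m : ℤ_[p])) : p ^ n ∣ m := by
  haveI : NeZero (p ^ n) := ⟨pow_ne_zero n (Nat.Prime.ne_zero Fact.out)⟩
  have h0 : (PadicInt.toZModPow n) ((m : ℤ_[p])) = 0 := by
    obtain ⟨t, ht⟩ := h
    rw [ht, map_mul]
    have hz : (PadicInt.toZModPow n) ((p : ℤ_[p]) ^ n) = 0 := by
      rw [map_pow, map_natCast, ← Nat.cast_pow, ZMod.natCast_self]
    rw [hz, zero_mul]
  rw [map_natCast] at h0
  exact (ZMod.natCast_eq_zero_iff m (p ^ n)).mp h0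

private lemma aux_lt (q : ℕ) (hq0 : 0 < q) (d : ℕ → ℕ) (hd : ∀ i, d i < q) (N : ℕ) :
    (∑ i ∈ Finset.range N, d i * q ^ i) < q ^ N := by
  induction N with
  | zero => simp
  | succ N ih =>
    rw [Finset.sum_range_succ]
    have h1 : d N * q ^ N ≤ (q - 1) * q ^ N :=
      Nat.mul_le_mul_right _ (Nat.le_sub_one_of_lt (hd N))
    have h2 : q ^ N + (q - 1) * q ^ N = q ^ (N + 1) := by
      have : q ^ N + (q - 1) * q ^ N = (1 + (q - 1)) * q ^ N := by ring
      rw [this, show 1 + (q - 1) = q by omega, pow_succ, mul_comm]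
    omega

/-- Reflection formula for the `v`-adic arithmetic gamma function.  Here `K` plays the
role of `k_v`, `a i` the role of `−D_{i,v}`, `digit z i` is the `i`-th base-`q` digit of
`z ∈ ℤ_p` (where `q = p^e`), and `Γ` is the `v`-adic arithmetic gamma function, defined
by `Γ(z+1) = ∏_{i≥0} (−D_{i,v})^{z_i}` as a convergent product.  Then for all `z ∈ ℤ_p`,
`Γ(z) · Γ(1 − z) = Γ(0)`. -/
theorem gamma_v_reflection (p : ℕ) [Fact p.Prime] (q e : ℕ) (hq : q = p ^ e) (he : 0 < e)
    (K : Type*) [Field K] [TopologicalSpace K] [IsTopologicalRing K] [T2Space K]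
    (a : ℕ → K)
    (digit : ℤ_[p] → ℕ → ℕ)
    (hdigLt : ∀ z i, digit z i < q)
    (hdigSum : ∀ z : ℤ_[p], HasSum (fun i => (digit z i : ℤ_[p]) * (q : ℤ_[p]) ^ i) z)
    (Γ : ℤ_[p] → K)
    (hΓ : ∀ z : ℤ_[p],
      Tendsto (fun N => ∏ i ∈ Finset.range N, a i ^ digit z i) atTop (nhds (Γ (z + 1))))
    (z : ℤ_[p]) :
    Γ z * Γ (1 - z) = Γ 0 := by
  have hq0 : 0 < q := hq ▸ pow_pos (Nat.Prime.pos Fact.out) e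
  have hqN : ∀ N : ℕ, q ^ N = p ^ (e * N) := fun N => by rw [hq, ← pow_mul]
  -- key: if w1 + w2 = -1 then digits sum to q - 1
  have key : ∀ w1 w2 : ℤ_[p], w1 + w2 = -1 →
      ∀ i, digit w1 i + digit w2 i + 1 = q := by
    intro w1 w2 hw
    have hSN : ∀ N : ℕ,
        (∑ i ∈ Finset.range N, digit w1 i * q ^ i) +
        (∑ i ∈ Finset.range N, digit w2 i * q ^ i) + 1 = q ^ N := by
      intro N
      have h1 := aux_dvd p q e hq digit hdigSum w1 N
      have h2 := aux_dvd p q e hq digit hdigSum w2 N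
      set m : ℕ := (∑ i ∈ Finset.range N, digit w1 i * q ^ i) +
        (∑ i ∈ Finset.range N, digit w2 i * q ^ i) + 1 with hm
      have h3 : ((p : ℤ_[p]) ^ (e * N)) ∣ (m : ℤ_[p]) := by
        have h4 := dvd_add h1 h2
        have h5 : (w1 - ∑ i ∈ Finset.range N, (digit w1 i : ℤ_[p]) * (q : ℤ_[p]) ^ i)
            + (w2 - ∑ i ∈ Finset.range N, (digit w2 i : ℤ_[p]) * (q : ℤ_[p]) ^ i)
            = -(m : ℤ_[p]) := by
          have h6 : (w1 - ∑ i ∈ Finset.range N, (digit w1 i : ℤ_[p]) * (q : ℤ_[p]) ^ i)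
              + (w2 - ∑ i ∈ Finset.range N, (digit w2 i : ℤ_[p]) * (q : ℤ_[p]) ^ i)
              = (w1 + w2) - ((∑ i ∈ Finset.range N, (digit w1 i : ℤ_[p]) * (q : ℤ_[p]) ^ i)
                + (∑ i ∈ Finset.range N, (digit w2 i : ℤ_[p]) * (q : ℤ_[p]) ^ i)) := by ring
          rw [h6, hw, hm]
          push_cast
          ring
        rw [h5] at h4
        exact (dvd_neg).mp h4
      have h7 : q ^ N ∣ m := by
        rw [hqN]
        exact aux_nat_dvd p (e * N) m h3
      have hb1 := aux_lt q hq0 (digit w1) (hdigLt w1) N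
      have hb2 := aux_lt q hq0 (digit w2) (hdigLt w2) N
      obtain ⟨k, hk⟩ := h7
      have hqNpos : 0 < q ^ N := pow_pos hq0 N
      have hk1 : k = 1 := by
        rcases Nat.lt_or_ge k 2 with h | h
        · have hk0 : k = 0 ∨ k = 1 := by omega
          rcases hk0 with hk0 | hk0
          · rw [hk0, mul_zero] at hk; omega
          · exact hk0
        · exfalso
          have hge : q ^ N * 2 ≤ q ^ N * k := Nat.mul_le_mul_left _ h
          omega
      rw [hk1, mul_one] at hk
      omega
    intro i
    have hi := hSN i
    have hi1 := hSN (i + 1)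
    rw [Finset.sum_range_succ, Finset.sum_range_succ] at hi1
    have hx : 0 < q ^ i := pow_pos hq0 i
    have hmul : (digit w1 i + digit w2 i + 1) * q ^ i = q * q ^ i := by
      calc (digit w1 i + digit w2 i + 1) * q ^ i
          = digit w1 i * q ^ i + digit w2 i * q ^ i +
            ((∑ j ∈ Finset.range i, digit w1 j * q ^ j) +
             (∑ j ∈ Finset.range i, digit w2 j * q ^ j) + 1) := by rw [hi]; ring
        _ = ((∑ j ∈ Finset.range i, digit w1 j * q ^ j) + digit w1 i * q ^ i) +
            ((∑ j ∈ Finset.range i, digit w2 j * q ^ j) + digit w2 i * q ^ i) + 1 := by ring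
        _ = q ^ (i + 1) := hi1
        _ = q * q ^ i := by rw [pow_succ, mul_comm]
    exact Nat.eq_of_mul_eq_mul_right hx hmul
  -- digits of 0 are all 0
  have hzero : ∀ i, digit 0 i = 0 := by
    have hS0 : ∀ N : ℕ, (∑ i ∈ Finset.range N, digit 0 i * q ^ i) = 0 := by
      intro N
      have h1 := aux_dvd p q e hq digit hdigSum 0 N
      rw [zero_sub, dvd_neg] at h1
      have h2 : ((p : ℤ_[p]) ^ (e * N)) ∣
          ((∑ i ∈ Finset.range N, digit 0 i * q ^ i : ℕ) : ℤ_[p]) := by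
        convert h1 using 1
        push_cast
        ring
      have h3 : q ^ N ∣ (∑ i ∈ Finset.range N, digit 0 i * q ^ i) := by
        rw [hqN]; exact aux_nat_dvd p (e * N) _ h2
      exact Nat.eq_zero_of_dvd_of_lt h3 (aux_lt q hq0 (digit 0) (hdigLt 0) N)
    intro i
    have h := hS0 (i + 1)
    rw [Finset.sum_range_succ, hS0 i, zero_add] at h
    have hx : 0 < q ^ i := pow_pos hq0 i
    rcases Nat.mul_eq_zero.mp h with h' | h'
    · exact h'
    · omega
  -- digit-wise equality
  have hdigeq : ∀ i, digit (z - 1) i + digit (-z) i = digit (-1) i := by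
    intro i
    have h1 := key (z - 1) (-z) (by ring) i
    have h2 := key (-1) 0 (by ring) i
    have h3 := hzero i
    omega
  have t1 := hΓ (z - 1)
  rw [show z - 1 + 1 = z by ring] at t1
  have t2 := hΓ (-z)
  rw [show -z + 1 = 1 - z by ring] at t2
  have t3 := hΓ (-1)
  rw [show (-1 : ℤ_[p]) + 1 = 0 by ring] at t3
  have tm := t1.mul t2
  have heqfun : (fun N => (∏ i ∈ Finset.range N, a i ^ digit (z - 1) i) *
      (∏ i ∈ Finset.range N, a i ^ digit (-z) i))
      = fun N => ∏ i ∈ Finset.range N, a i ^ digit (-1) i := by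
    funext N
    rw [← Finset.prod_mul_distrib]
    exact Finset.prod_congr rfl fun i _ => by rw [← pow_add, hdigeq i]
  rw [heqfun] at tm
  exact tendsto_nhds_unique tm t3
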